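/- Let U ⊆ ℂ be open, g₂, g₃ ∈ ℂ, and let p : U → ℂ be holomorphic with (p'(x))² = 4 p(x)³ − g₂ p(x) − g₃ and p''(x) = 6 p(x)² − g₂/2 on U. Fix E ∈ ℂ and set v(x) = 6 p(x) and Ξ(x) = E² + 3 p(x) E + 9 ( p(x)² − g₂/4 ). Then for every x ∈ U one has Ξ(x)² ( E − v(x) ) + (1/2) Ξ(x) Ξ''(x) − (1/4) (Ξ'(x))² = (E² − 3 g₂)(E³ − (9/4) g₂ E − (27/4) g₃). -/

import Mathlib

theorem spectral_polynomial_for_Lame_l2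
    (U : Set ℂ) (hU : IsOpen U) (g₂ g₃ E : ℂ) (p : ℂ → ℂ)
    (hp : DifferentiableOn ℂ p U)
    (hp' : ∀ x ∈ U, (deriv p x) ^ 2 = 4 * (p x) ^ 3 - g₂ * p x - g₃)
    (hp'' : ∀ x ∈ U, deriv (deriv p) x = 6 * (p x) ^ 2 - g₂ / 2) :
    ∀ x ∈ U,
      (E ^ 2 + 3 * p x * E + 9 * ((p x) ^ 2 - g₂ / 4)) ^ 2 * (E - 6 * p x)
        + (1 / 2) * (E ^ 2 + 3 * p x * E + 9 * ((p x) ^ 2 - g₂ / 4)) *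
            deriv (deriv (fun y => E ^ 2 + 3 * p y * E + 9 * ((p y) ^ 2 - g₂ / 4))) x
        - (1 / 4) * (deriv (fun y => E ^ 2 + 3 * p y * E + 9 * ((p y) ^ 2 - g₂ / 4)) x) ^ 2
      = (E ^ 2 - 3 * g₂) * (E ^ 3 - (9 / 4) * g₂ * E - (27 / 4) * g₃) := by
  have hpa : AnalyticOnNhd ℂ p U := hp.analyticOnNhd hU
  have hpd : ∀ x ∈ U, DifferentiableAt ℂ p x := fun x hx =>
    (hpa x hx).differentiableAt
  have hpd' : ∀ x ∈ U, DifferentiableAt ℂ (deriv p) x := fun x hx =>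
    ((hpa.deriv) x hx).differentiableAt
  -- first derivative of Ξ
  have hXi : ∀ x ∈ U,
      HasDerivAt (fun y => E ^ 2 + 3 * p y * E + 9 * ((p y) ^ 2 - g₂ / 4))
        (3 * deriv p x * E + 9 * (2 * p x * deriv p x)) x := by
    intro x hx
    have h1 : HasDerivAt p (deriv p x) x := (hpd x hx).hasDerivAt
    have := ((h1.const_mul 3).mul_const E).const_add (E ^ 2)
    have h2 := (((h1.pow 2).sub_const (g₂ / 4)).const_mul 9)
    exact (this.add h2).congr_deriv (by norm_num)
  have hXi' : ∀ x ∈ U,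
      deriv (fun y => E ^ 2 + 3 * p y * E + 9 * ((p y) ^ 2 - g₂ / 4)) x
        = 3 * deriv p x * E + 9 * (2 * p x * deriv p x) := fun x hx =>
    (hXi x hx).deriv
  intro x hx
  -- second derivative of Ξ
  have heq : deriv (fun y => E ^ 2 + 3 * p y * E + 9 * ((p y) ^ 2 - g₂ / 4))
      =ᶠ[nhds x] fun y => 3 * deriv p y * E + 9 * (2 * p y * deriv p y) := by
    filter_upwards [hU.mem_nhds hx] with y hy using hXi' y hy
  have hg : HasDerivAt (fun y => 3 * deriv p y * E + 9 * (2 * p y * deriv p y))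
      (3 * deriv (deriv p) x * E
        + 9 * (2 * deriv p x * deriv p x + 2 * p x * deriv (deriv p) x)) x := by
    have h1 : HasDerivAt p (deriv p x) x := (hpd x hx).hasDerivAt
    have h2 : HasDerivAt (deriv p) (deriv (deriv p) x) x := (hpd' x hx).hasDerivAt
    have ha := (h2.const_mul 3).mul_const E
    have hb := (((h1.const_mul 2).mul h2).const_mul 9)
    exact (ha.add hb).congr_deriv (by ring)
  have hXi'' : deriv (deriv (fun y => E ^ 2 + 3 * p y * E + 9 * ((p y) ^ 2 - g₂ / 4))) x
      = 3 * deriv (deriv p) x * E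
        + 9 * (2 * deriv p x * deriv p x + 2 * p x * deriv (deriv p) x) := by
    rw [heq.deriv_eq]
    exact hg.deriv
  rw [hXi' x hx, hXi'']
  have e1 := hp' x hx
  rw [hp'' x hx]
  linear_combination (9*(E^2+3*p x*E+9*((p x)^2-g₂/4)) - (3*E+18*p x)^2/4) * e1
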